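/- Let ρ : ℝ^d → ℝ be continuous and integrable with ρ(0) = 1, |ρ(t)| ≤ 1 for all t, and inf_t ρ(t) > −1. Let δ ∈ (0,1) and let ε > 0 be small enough that 1 − ρ(s) < δ for all s ∈ [−ε,ε]^d. Set I(u) = ∫_{[−ε,ε]^d} ( ∫_0^{ρ(t)} φ(u,u,y) dy ) dt. Then limsup_{u→∞} I(u) / [ 2 (2/(2−δ))^{1/2} (φ(u)/u) ∫_{[−ε,ε]^d} Φ̄( u ((1−ρ(t))/2)^{1/2} ) dt ] ≤ 1. -/

import Mathlib

open MeasureTheory Filter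

/-- The standard Gaussian density `φ(u) = (2π)^{-1/2} e^{-u²/2}`. -/
noncomputable def gaussDensity (u : ℝ) : ℝ := Real.exp (-u ^ 2 / 2) / Real.sqrt (2 * Real.pi)

/-- The standard Gaussian tail `Φ̄(u) = ∫_u^∞ φ(x) dx`. -/
noncomputable def gaussTail (u : ℝ) : ℝ := ∫ x in Set.Ici u, gaussDensity x

/-- The density at `(u,u)` of the centered bivariate Gaussian vector with unit variances
and correlation `y`: `φ(u,u,y) = exp(-u²/(1+y)) / (2π √(1-y²))`. -/
noncomputable def biGaussDensity (u y : ℝ) : ℝ :=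
  Real.exp (-u ^ 2 / (1 + y)) / (2 * Real.pi * Real.sqrt (1 - y ^ 2))

open Set intervalIntegral

lemma gd_pos (x : ℝ) : 0 < gaussDensity x :=
  div_pos (Real.exp_pos _) (Real.sqrt_pos.mpr (by positivity))

lemma gd_le (x : ℝ) : gaussDensity x ≤ 1 / Real.sqrt (2 * Real.pi) := by
  unfold gaussDensity
  have h1 : Real.exp (-x ^ 2 / 2) ≤ 1 := Real.exp_le_one_iff.mpr (by nlinarith [sq_nonneg x])
  exact (div_le_div_iff_of_pos_right (Real.sqrt_pos.mpr (by positivity))).mpr h1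

lemma gd_cont : Continuous gaussDensity := by
  unfold gaussDensity; fun_prop

lemma gd_int : Integrable gaussDensity := by
  have h : Integrable (fun x : ℝ => Real.exp (-(1/2) * x ^ 2)) := integrable_exp_neg_mul_sq (by norm_num)
  have := h.div_const (Real.sqrt (2 * Real.pi))
  refine this.congr (Filter.Eventually.of_forall fun x => ?_)
  unfold gaussDensity; ring_nf

lemma gaussTail_eq (x : ℝ) : gaussTail x = gaussTail 0 - ∫ t in (0:ℝ)..x, gaussDensity t := by
  have key : ∀ a : ℝ, gaussTail a = (∫ t, gaussDensity t) - ∫ t in Iic a, gaussDensity t := by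
    intro a
    have h := MeasureTheory.integral_add_compl (measurableSet_Iic (a := a)) gd_int
    unfold gaussTail
    rw [MeasureTheory.integral_Iic_eq_integral_Iio, ← h,
      Set.compl_Iic,
      MeasureTheory.integral_Ici_eq_integral_Ioi, MeasureTheory.integral_Iic_eq_integral_Iio]
    ring
  rw [key, key 0, ← intervalIntegral.integral_Iic_sub_Iic gd_int.integrableOn gd_int.integrableOn]
  ring

lemma hasDerivAt_gaussTail (x : ℝ) : HasDerivAt gaussTail (-(gaussDensity x)) x := by
  have h1 : HasDerivAt (fun y => ∫ t in (0:ℝ)..y, gaussDensity t) (gaussDensity x) x :=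
    intervalIntegral.integral_hasDerivAt_right gd_int.intervalIntegrable
      gd_cont.aestronglyMeasurable.stronglyMeasurableAtFilter gd_cont.continuousAt
  have h2 := (hasDerivAt_const x (gaussTail 0)).sub h1
  simp only [zero_sub] at h2
  exact h2.congr_of_eventuallyEq (Filter.Eventually.of_forall fun y => gaussTail_eq y)

lemma gaussTail_cont : Continuous gaussTail :=
  continuous_iff_continuousAt.mpr fun x => (hasDerivAt_gaussTail x).continuousAt

lemma gaussTail_pos (x : ℝ) : 0 < gaussTail x := by
  unfold gaussTail
  rw [MeasureTheory.setIntegral_pos_iff_support_of_nonneg_ae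
    (Filter.Eventually.of_forall fun y => (gd_pos y).le) gd_int.integrableOn]
  have : Function.support gaussDensity ∩ Ici x = Ici x := by
    rw [Set.inter_eq_right]
    intro y _; exact (gd_pos y).ne'
  rw [this, Real.volume_Ici]
  exact ENNReal.zero_lt_top

set_option maxHeartbeats 2000000 in
lemma key_pointwise {δ u y : ℝ} (hδ0 : 0 < δ) (hδ1 : δ < 1) (hu : 2/δ ≤ u)
    (hy0 : 0 ≤ y) (hy1 : y ≤ 1) :
    biGaussDensity u y ≤ 2 * Real.sqrt (2/(2-δ)) * (gaussDensity u / u) *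
      (gaussDensity (u * Real.sqrt ((1-y)/2)) * (u / (4 * Real.sqrt ((1-y)/2)))) := by
  have hu0 : 0 < u := lt_of_lt_of_le (by positivity) hu
  rcases eq_or_lt_of_le hy1 with h1 | h1
  · subst h1
    simp [biGaussDensity, show (1:ℝ) - 1^2 = 0 by ring, show ((1:ℝ)-1)/2 = 0 by ring]
  -- now y < 1
  set s := Real.sqrt (1-y) with hs
  have hs0 : 0 < s := Real.sqrt_pos.mpr (by linarith)
  have h2 : Real.sqrt ((1-y)/2) = s / Real.sqrt 2 := Real.sqrt_div (by linarith) 2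
  have h3 : Real.sqrt (1 - y^2) = s * Real.sqrt (1+y) := by
    rw [show 1 - y^2 = (1-y)*(1+y) by ring, Real.sqrt_mul (by linarith)]
  have h4 : (u * Real.sqrt ((1-y)/2))^2 = u^2 * ((1-y)/2) := by
    rw [mul_pow, Real.sq_sqrt (by linarith)]
  have hy1' : (0:ℝ) < 1 + y := by linarith
  have hsy : (0:ℝ) < Real.sqrt (1+y) := Real.sqrt_pos.mpr hy1'
  have hsδ : (0:ℝ) < Real.sqrt (2-δ) := Real.sqrt_pos.mpr (by linarith)
  set B := u^2*(1-y)^2/(4*(1+y)) with hB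
  -- the key scalar inequality (★)
  have hstar : Real.sqrt (2-δ) * Real.exp (-B) ≤ Real.sqrt (1+y) := by
    have hBnn : 0 ≤ B := by positivity
    by_cases hcase : 1 - δ ≤ y
    · have hle : Real.sqrt (2-δ) ≤ Real.sqrt (1+y) := Real.sqrt_le_sqrt (by linarith)
      have he : Real.exp (-B) ≤ 1 := Real.exp_le_one_iff.mpr (by linarith)
      nlinarith [Real.exp_pos (-B)]
    · push_neg at hcase
      have hu2 : 4/δ^2 ≤ u^2 := by
        have h := pow_le_pow_left₀ (by positivity) hu 2
        calc 4/δ^2 = (2/δ)^2 := by rw [div_pow]; norm_num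
          _ ≤ u^2 := h
      have h1y : δ ≤ 1 - y := by linarith
      have hBhalf : 1/2 ≤ B := by
        rw [hB, le_div_iff₀ (by linarith : (0:ℝ) < 4*(1+y))]
        have hp : 4 ≤ u^2 * (1-y)^2 := by
          have e1 : 4/δ^2 * δ^2 = 4 := by field_simp
          have e2 : δ^2 ≤ (1-y)^2 := by nlinarith
          nlinarith [sq_nonneg u, sq_nonneg δ]
        nlinarith
      have he : Real.exp (-B) ≤ Real.exp (-(1/2)) := Real.exp_le_exp.mpr (by linarith)
      have key2 : Real.sqrt 2 * Real.exp (-(1/2)) ≤ 1 := by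
        have e2 : Real.exp (-(1/2:ℝ)) ^ 2 = Real.exp (-1) := by
          rw [sq, ← Real.exp_add]; norm_num
        have e3 : Real.exp (-1:ℝ) * Real.exp 1 = 1 := by rw [← Real.exp_add]; norm_num
        have e4 : (2:ℝ) ≤ Real.exp 1 := by have := Real.add_one_le_exp (1:ℝ); linarith
        have hsq : (Real.sqrt 2 * Real.exp (-(1/2:ℝ)))^2 ≤ 1 := by
          rw [mul_pow, Real.sq_sqrt (by norm_num : (0:ℝ) ≤ 2), e2]
          nlinarith [Real.exp_pos (-1:ℝ)]
        have habs := (sq_le_one_iff_abs_le_one (a := Real.sqrt 2 * Real.exp (-(1/2:ℝ)))).mp hsq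
        exact (abs_le.mp habs).2
      have h5 : Real.sqrt (2-δ) ≤ Real.sqrt 2 := Real.sqrt_le_sqrt (by linarith)
      have h6 : (1:ℝ) ≤ Real.sqrt (1+y) := by
        exact Real.le_sqrt_of_sq_le (by nlinarith)
      calc Real.sqrt (2-δ) * Real.exp (-B)
          ≤ Real.sqrt 2 * Real.exp (-(1/2:ℝ)) :=
            mul_le_mul h5 he (Real.exp_pos _).le (Real.sqrt_nonneg 2)
        _ ≤ 1 := key2
        _ ≤ Real.sqrt (1+y) := h6
  -- rewrite both sides
  have hsπ : Real.sqrt (2*Real.pi) * Real.sqrt (2*Real.pi) = 2*Real.pi :=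
    Real.mul_self_sqrt (by positivity)
  have hsπ0 : (0:ℝ) < Real.sqrt (2*Real.pi) := Real.sqrt_pos.mpr (by positivity)
  have hs2 : Real.sqrt 2 * Real.sqrt 2 = 2 := Real.mul_self_sqrt (by norm_num)
  have hs20 : (0:ℝ) < Real.sqrt 2 := Real.sqrt_pos.mpr (by norm_num)
  have hEA : Real.exp (-u^2/(1+y))
      = Real.exp (-(u^2*(3-y)/4)) * Real.exp (-B) := by
    rw [← Real.exp_add]; congr 1; rw [hB]; field_simp; ring
  have hLHS : biGaussDensity u y
      = (Real.exp (-B) / Real.sqrt (1+y)) *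
        (Real.exp (-(u^2*(3-y)/4)) / (2*Real.pi*s)) := by
    rw [biGaussDensity, h3, hEA]
    field_simp
  have he2 : Real.exp (-(u * Real.sqrt ((1-y)/2))^2/2) = Real.exp (-(u^2*(1-y)/4)) := by
    congr 1; rw [h4]; ring
  have hmul : Real.exp (-u^2/2) * Real.exp (-(u^2*(1-y)/4))
      = Real.exp (-(u^2*(3-y)/4)) := by rw [← Real.exp_add]; congr 1; ring
  have hq : Real.sqrt (2/(2-δ)) = Real.sqrt 2 / Real.sqrt (2-δ) :=
    Real.sqrt_div (by norm_num) _
  have hRHS : 2 * Real.sqrt (2/(2-δ)) * (gaussDensity u / u) *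
      (gaussDensity (u * Real.sqrt ((1-y)/2)) * (u / (4 * Real.sqrt ((1-y)/2))))
      = (1 / Real.sqrt (2-δ)) *
        (Real.exp (-(u^2*(3-y)/4)) / (2*Real.pi*s)) := by
    calc 2 * Real.sqrt (2/(2-δ)) * (gaussDensity u / u) *
        (gaussDensity (u * Real.sqrt ((1-y)/2)) * (u / (4 * Real.sqrt ((1-y)/2))))
        = (Real.sqrt 2 * Real.sqrt 2 / 2) * ((1 / Real.sqrt (2-δ)) *
            ((Real.exp (-u^2/2) * Real.exp (-(u^2*(1-y)/4))) /
              (Real.sqrt (2*Real.pi) * Real.sqrt (2*Real.pi) * s))) := by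
          rw [gaussDensity, gaussDensity, he2, hq, h2]
          generalize hQ : Real.sqrt (2*Real.pi) = Q
          generalize hR : Real.sqrt 2 = R
          have hQ0 : Q ≠ 0 := by rw [← hQ]; exact hsπ0.ne'
          have hR0 : R ≠ 0 := by rw [← hR]; exact hs20.ne'
          field_simp
          ring
      _ = (1 / Real.sqrt (2-δ)) *
            (Real.exp (-(u^2*(3-y)/4)) / (2*Real.pi*s)) := by
          rw [hs2, hmul, hsπ]; ring
  rw [hLHS, hRHS]
  have hP : (0:ℝ) ≤ Real.exp (-(u^2*(3-y)/4)) / (2*Real.pi*s) := by positivity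
  apply mul_le_mul_of_nonneg_right ?_ hP
  rw [div_le_div_iff₀ hsy hsδ, one_mul, mul_comm]
  exact hstar

lemma rpow_majorant_intInt : IntervalIntegrable (fun y : ℝ => (1 - y) ^ (-(1/2) : ℝ)) volume 0 1 := by
  have h := (intervalIntegrable_rpow' (a := 0) (b := 1) (r := -(1/2)) (by norm_num)).comp_sub_left 1
  norm_num at h
  exact h.symm

lemma rpow_eq_inv_sqrt {y : ℝ} (h1 : y < 1) :
    (1 - y) ^ (-(1/2) : ℝ) = 1 / Real.sqrt (1 - y) := by
  rw [one_div, Real.rpow_neg (by linarith : (0:ℝ) ≤ 1 - y)]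
  congr 1
  rw [Real.sqrt_eq_rpow]
  norm_num

lemma biGauss_nonneg (u y : ℝ) : 0 ≤ biGaussDensity u y := by
  unfold biGaussDensity
  positivity

lemma biGauss_bound {u y : ℝ} (hy0 : 0 ≤ y) (hy1 : y ≤ 1) :
    ‖biGaussDensity u y‖ ≤ (1/(2*Real.pi)) * (1 - y) ^ (-(1/2) : ℝ) := by
  rw [Real.norm_eq_abs, abs_of_nonneg (biGauss_nonneg u y)]
  rcases eq_or_lt_of_le hy1 with h1 | h1
  · subst h1
    simp [biGaussDensity, show (1:ℝ) - 1^2 = 0 by ring, Real.zero_rpow (by norm_num : (-(1/2):ℝ) ≠ 0)]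
  · have hpos : (0:ℝ) < Real.sqrt (1-y) := Real.sqrt_pos.mpr (by linarith)
    calc biGaussDensity u y ≤ 1/(2*Real.pi*Real.sqrt (1-y)) := by
          rw [biGaussDensity]
          apply div_le_div₀ zero_le_one
            (Real.exp_le_one_iff.mpr (by
              rw [neg_div]; exact neg_nonpos.mpr (by positivity)))
            (by positivity)
            (by
              have : Real.sqrt (1-y) ≤ Real.sqrt (1-y^2) := Real.sqrt_le_sqrt (by nlinarith)
              nlinarith [Real.pi_pos])
      _ = (1/(2*Real.pi)) * (1 - y) ^ (-(1/2) : ℝ) := by rw [rpow_eq_inv_sqrt h1]; field_simp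

lemma D_bound {u y : ℝ} (hu0 : 0 < u) (hy1 : y ≤ 1) :
    ‖gaussDensity (u * Real.sqrt ((1-y)/2)) * (u / (4 * Real.sqrt ((1-y)/2)))‖ ≤
      (u / Real.sqrt (2*Real.pi)) * (1 - y) ^ (-(1/2) : ℝ) := by
  rcases eq_or_lt_of_le hy1 with h1 | h1
  · subst h1
    simp [show ((1:ℝ)-1)/2 = 0 by ring, Real.zero_rpow (by norm_num : (-(1/2):ℝ) ≠ 0)]
  · have hpos : (0:ℝ) < Real.sqrt (1-y) := Real.sqrt_pos.mpr (by linarith)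
    have h2 : Real.sqrt ((1-y)/2) = Real.sqrt (1-y) / Real.sqrt 2 := Real.sqrt_div (by linarith) 2
    have hq0 : (0:ℝ) < Real.sqrt ((1-y)/2) := by rw [h2]; positivity
    rw [Real.norm_eq_abs, abs_of_nonneg (mul_nonneg (gd_pos _).le (by positivity))]
    have hb1 : gaussDensity (u * Real.sqrt ((1-y)/2)) ≤ 1 / Real.sqrt (2*Real.pi) := gd_le _
    have hb2 : u / (4 * Real.sqrt ((1-y)/2)) ≤ u / Real.sqrt (1-y) := by
      apply div_le_div_of_nonneg_left hu0.le hpos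
      rw [h2]
      have hs2 : Real.sqrt 2 ≤ 2 := by
        nlinarith [Real.sq_sqrt (by norm_num : (0:ℝ) ≤ 2), Real.sqrt_nonneg 2]
      have h20 : (0:ℝ) < Real.sqrt 2 := Real.sqrt_pos.mpr (by norm_num)
      rw [show 4*(Real.sqrt (1-y)/Real.sqrt 2) = 4*Real.sqrt (1-y)/Real.sqrt 2 from
        (mul_div_assoc _ _ _).symm, le_div_iff₀ h20]
      nlinarith
    calc gaussDensity (u * Real.sqrt ((1-y)/2)) * (u / (4 * Real.sqrt ((1-y)/2)))
        ≤ (1 / Real.sqrt (2*Real.pi)) * (u / Real.sqrt (1-y)) :=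
          mul_le_mul hb1 hb2 (by positivity) (by positivity)
      _ = (u / Real.sqrt (2*Real.pi)) * (1 - y) ^ (-(1/2) : ℝ) := by
          rw [rpow_eq_inv_sqrt h1]; field_simp

lemma biGauss_measurable (u : ℝ) : Measurable (biGaussDensity u) := by
  unfold biGaussDensity
  fun_prop

lemma biGauss_intInt (u : ℝ) {r : ℝ} (hr0 : 0 ≤ r) (hr1 : r ≤ 1) :
    IntervalIntegrable (biGaussDensity u) volume 0 r := by
  have hmaj : IntervalIntegrable (fun y : ℝ => (1/(2*Real.pi)) * (1 - y) ^ (-(1/2) : ℝ)) volume 0 r :=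
    (rpow_majorant_intInt.mono_set (by
      rw [Set.uIcc_of_le hr0, Set.uIcc_of_le (by norm_num : (0:ℝ) ≤ 1)]
      exact Set.Icc_subset_Icc le_rfl hr1)).const_mul _
  apply hmaj.mono_fun (biGauss_measurable u).aestronglyMeasurable.restrict
  rw [Filter.EventuallyLE, ae_restrict_iff' measurableSet_uIoc]
  refine Filter.Eventually.of_forall fun y hy => ?_
  rw [Set.uIoc_of_le hr0] at hy
  refine (biGauss_bound hy.1.le (hy.2.trans hr1)).trans ?_
  rw [Real.norm_eq_abs]
  exact le_abs_self _

lemma D_measurable (u : ℝ) : Measurable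
    (fun y => gaussDensity (u * Real.sqrt ((1-y)/2)) * (u / (4 * Real.sqrt ((1-y)/2)))) := by
  unfold gaussDensity
  fun_prop

lemma D_intInt {u : ℝ} (hu0 : 0 < u) {r : ℝ} (hr0 : 0 ≤ r) (hr1 : r ≤ 1) :
    IntervalIntegrable
      (fun y => gaussDensity (u * Real.sqrt ((1-y)/2)) * (u / (4 * Real.sqrt ((1-y)/2))))
      volume 0 r := by
  have hmaj : IntervalIntegrable (fun y : ℝ => (u/Real.sqrt (2*Real.pi)) * (1 - y) ^ (-(1/2) : ℝ)) volume 0 r :=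
    (rpow_majorant_intInt.mono_set (by
      rw [Set.uIcc_of_le hr0, Set.uIcc_of_le (by norm_num : (0:ℝ) ≤ 1)]
      exact Set.Icc_subset_Icc le_rfl hr1)).const_mul _
  apply hmaj.mono_fun (D_measurable u).aestronglyMeasurable.restrict
  rw [Filter.EventuallyLE, ae_restrict_iff' measurableSet_uIoc]
  refine Filter.Eventually.of_forall fun y hy => ?_
  rw [Set.uIoc_of_le hr0] at hy
  refine (D_bound hu0 (hy.2.trans hr1)).trans ?_
  rw [Real.norm_eq_abs]
  exact le_abs_self _

lemma key_interval {δ u r : ℝ} (hδ0 : 0 < δ) (hδ1 : δ < 1) (hu : 2/δ ≤ u)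
    (hr1 : 1 - r < δ) (hr2 : r ≤ 1) :
    ∫ y in (0:ℝ)..r, biGaussDensity u y ≤
      2 * Real.sqrt (2/(2-δ)) * (gaussDensity u / u) *
        gaussTail (u * Real.sqrt ((1-r)/2)) := by
  have hu0 : 0 < u := lt_of_lt_of_le (by positivity) hu
  have hr0 : 0 < r := by linarith
  set C := 2 * Real.sqrt (2/(2-δ)) * (gaussDensity u / u) with hC
  have hC0 : 0 ≤ C := by
    have := gd_pos u
    positivity
  set D := fun y => gaussDensity (u * Real.sqrt ((1-y)/2)) * (u / (4 * Real.sqrt ((1-y)/2))) with hD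
  set G := fun y => gaussTail (u * Real.sqrt ((1-y)/2)) with hG
  -- step 1: pointwise comparison
  have h1 : ∫ y in (0:ℝ)..r, biGaussDensity u y ≤ ∫ y in (0:ℝ)..r, C * D y := by
    apply intervalIntegral.integral_mono_on hr0.le (biGauss_intInt u hr0.le hr2)
      (((D_intInt hu0 hr0.le hr2)).const_mul C)
    intro y hy
    exact key_pointwise hδ0 hδ1 hu hy.1 (hy.2.trans hr2)
  -- step 2: FTC
  have hGcont : Continuous G := by
    apply gaussTail_cont.comp
    fun_prop
  have h2 : ∫ y in (0:ℝ)..r, D y = G r - G 0 := by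
    apply intervalIntegral.integral_eq_sub_of_hasDeriv_right hGcont.continuousOn
    · intro x hx
      rw [min_eq_left hr0.le, max_eq_right hr0.le] at hx
      have hx1 : x < 1 := lt_of_lt_of_le hx.2 hr2
      have hpos : (0:ℝ) < (1-x)/2 := by linarith
      have hq0 : (0:ℝ) < Real.sqrt ((1-x)/2) := Real.sqrt_pos.mpr hpos
      have d1 : HasDerivAt (fun y : ℝ => (1-y)/2) (-1/2 : ℝ) x := by
        have h := ((hasDerivAt_const x (1:ℝ)).sub (hasDerivAt_id x)).div_const 2
        simpa using h
      have d2 := (Real.hasDerivAt_sqrt hpos.ne').comp x d1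
      have d3 := d2.const_mul u
      have d4 := (hasDerivAt_gaussTail (u * Real.sqrt ((1-x)/2))).comp x d3
      convert d4.hasDerivWithinAt using 1
      · rfl
      rw [hD]; field_simp; ring
    · exact D_intInt hu0 hr0.le hr2
  have h3 : ∫ y in (0:ℝ)..r, C * D y = C * (G r - G 0) := by
    rw [intervalIntegral.integral_const_mul, h2]
  have h4 : G 0 ≥ 0 := (gaussTail_pos _).le
  calc ∫ y in (0:ℝ)..r, biGaussDensity u y ≤ C * (G r - G 0) := by rw [← h3]; exact h1
    _ ≤ C * G r := by nlinarith
    _ = 2 * Real.sqrt (2/(2-δ)) * (gaussDensity u / u) * gaussTail (u * Real.sqrt ((1-r)/2)) := rfl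

theorem limsup_bound_of_B
    {d : ℕ} (hd : 0 < d) (ρ : (Fin d → ℝ) → ℝ)
    (hρcont : Continuous ρ) (hρint : Integrable ρ)
    (hρ0 : ρ 0 = 1) (hρle : ∀ t, |ρ t| ≤ 1)
    -- `inf_t ρ(t) > -1`
    (hinf : ∃ m : ℝ, -1 < m ∧ ∀ t, m ≤ ρ t)
    (δ : ℝ) (hδ0 : 0 < δ) (hδ1 : δ < 1)
    (ε : ℝ) (hε : 0 < ε)
    (hεδ : ∀ s ∈ Set.Icc (fun _ => -ε) ((fun _ => ε) : Fin d → ℝ), 1 - ρ s < δ)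
    -- `I(u) = ∫_{[-ε,ε]^d} ∫_0^{ρ(t)} φ(u,u,y) dy dt`
    (I : ℝ → ℝ)
    (hI : ∀ u, I u = ∫ t in Set.Icc (fun _ => -ε) ((fun _ => ε) : Fin d → ℝ),
      ∫ y in (0 : ℝ)..(ρ t), biGaussDensity u y) :
    Filter.limsup (fun u : ℝ =>
        I u / (2 * Real.sqrt (2 / (2 - δ)) * (gaussDensity u / u) *
          ∫ t in Set.Icc (fun _ => -ε) ((fun _ => ε) : Fin d → ℝ),
            gaussTail (u * Real.sqrt ((1 - ρ t) / 2))))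
      atTop ≤ 1 := by
  set K := Set.Icc (fun _ => -ε) ((fun _ => ε) : Fin d → ℝ) with hK
  have hKcomp : IsCompact K := isCompact_Icc
  have hKmeas : MeasurableSet K := measurableSet_Icc
  have hKρ : ∀ t ∈ K, 1 - δ < ρ t ∧ ρ t ≤ 1 := fun t ht =>
    ⟨by have := hεδ t ht; linarith, (abs_le.mp (hρle t)).2⟩
  have hKvol : 0 < volume K := by
    rw [hK, Real.volume_Icc_pi]
    rw [CanonicallyOrderedAdd.prod_pos]
    intro i _
    exact ENNReal.ofReal_pos.mpr (by linarith)
  -- eventual bound: for u ≥ 2/δ the ratio is in [0, 1]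
  have hev : ∀ u : ℝ, 2/δ ≤ u →
      I u / (2 * Real.sqrt (2 / (2 - δ)) * (gaussDensity u / u) *
        ∫ t in K, gaussTail (u * Real.sqrt ((1 - ρ t) / 2))) ≤ 1 ∧
      0 ≤ I u / (2 * Real.sqrt (2 / (2 - δ)) * (gaussDensity u / u) *
        ∫ t in K, gaussTail (u * Real.sqrt ((1 - ρ t) / 2))) := by
    intro u hu
    have hu0 : 0 < u := lt_of_lt_of_le (by positivity) hu
    have hcontg : Continuous (fun t => gaussTail (u * Real.sqrt ((1 - ρ t) / 2))) := by
      apply gaussTail_cont.comp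
      exact continuous_const.mul (Real.continuous_sqrt.comp (by fun_prop))
    have hgint : IntegrableOn (fun t => gaussTail (u * Real.sqrt ((1 - ρ t) / 2))) K :=
      hcontg.continuousOn.integrableOn_compact hKcomp
    have hJpos : 0 < ∫ t in K, gaussTail (u * Real.sqrt ((1 - ρ t) / 2)) := by
      rw [MeasureTheory.setIntegral_pos_iff_support_of_nonneg_ae
        (Filter.Eventually.of_forall fun t => (gaussTail_pos _).le) hgint]
      refine lt_of_lt_of_le hKvol (measure_mono fun t ht => ?_)
      exact ⟨(gaussTail_pos _).ne', ht⟩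
    have h2δ : (0:ℝ) < 2 - δ := by linarith
    have hCpos : 0 < 2 * Real.sqrt (2 / (2 - δ)) * (gaussDensity u / u) := by
      have := gd_pos u
      positivity
    have hInn : I u ≤ 2 * Real.sqrt (2 / (2 - δ)) * (gaussDensity u / u) *
        ∫ t in K, gaussTail (u * Real.sqrt ((1 - ρ t) / 2)) := by
      rw [hI u]
      have hint01 : IntegrableOn (biGaussDensity u) (Set.uIcc (0:ℝ) 1) := by
        rw [Set.uIcc_of_le (by norm_num : (0:ℝ) ≤ 1)]
        exact (intervalIntegrable_iff_integrableOn_Icc_of_le (by norm_num)).mp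
          (biGauss_intInt u (by norm_num) le_rfl)
      have hprim := intervalIntegral.continuousOn_primitive_interval (a := (0:ℝ)) (b := 1) hint01
      have hFcont : ContinuousOn (fun t => ∫ y in (0:ℝ)..(ρ t), biGaussDensity u y) K := by
        refine hprim.comp hρcont.continuousOn fun t ht => ?_
        rw [Set.uIcc_of_le (by norm_num : (0:ℝ) ≤ 1)]
        exact ⟨by linarith [(hKρ t ht).1], (hKρ t ht).2⟩
      have hFint : IntegrableOn (fun t => ∫ y in (0:ℝ)..(ρ t), biGaussDensity u y) K :=
        hFcont.integrableOn_compact hKcomp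
      calc (∫ t in K, ∫ y in (0:ℝ)..(ρ t), biGaussDensity u y)
          ≤ ∫ t in K, 2 * Real.sqrt (2 / (2 - δ)) * (gaussDensity u / u) *
              gaussTail (u * Real.sqrt ((1 - ρ t) / 2)) := by
            refine MeasureTheory.setIntegral_mono_on hFint (hgint.const_mul _) hKmeas
              fun t ht => ?_
            exact key_interval hδ0 hδ1 hu (hεδ t ht) (hKρ t ht).2
        _ = 2 * Real.sqrt (2 / (2 - δ)) * (gaussDensity u / u) *
              ∫ t in K, gaussTail (u * Real.sqrt ((1 - ρ t) / 2)) :=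
            MeasureTheory.integral_const_mul _ _
    have hInonneg : 0 ≤ I u := by
      rw [hI u]
      refine MeasureTheory.setIntegral_nonneg hKmeas fun t ht => ?_
      refine intervalIntegral.integral_nonneg (by linarith [(hKρ t ht).1]) fun y _ =>
        biGauss_nonneg u y
    constructor
    · rw [div_le_one (mul_pos hCpos hJpos)]
      exact hInn
    · exact div_nonneg hInonneg (mul_pos hCpos hJpos).le
  apply Filter.limsup_le_of_le
  · refine Filter.isCoboundedUnder_le_of_eventually_le atTop (x := 0) ?_
    exact (Filter.eventually_ge_atTop (2/δ)).mono fun u hu => (hev u hu).2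
  · exact (Filter.eventually_ge_atTop (2/δ)).mono fun u hu => (hev u hu).1
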